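/- For the q-bit layered erasure broadcast channel (N_1, N_2) and any ω ≥ 0, the maximum of Σ_{n=1}^q [B~(n)]_+ + ω Σ_{n=1}^q P(N_2 ≥ n) expressed via the decomposition Σ_n B~(n)·H(X_n | X^{n-1}, V) + ω Σ_n P(N_2 ≥ n)·H(X_n | X^{n-1}) over distributions of (V, X^q) is achieved by taking X_1,...,X_q i.i.d. Bernoulli(1/2) and V = {X_n : B~(n) ≤ 0}; the maximum equals Σ_{n : B~(n) > 0} B~(n) + ω Σ_{n=1}^q P(N_2 ≥ n). -/

import Mathlib

open Finset

attribute [local instance] Classical.propDecidable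

/-- Probability of an event under a pmf `p` on a finite sample space. -/
noncomputable def pA {Ω : Type*} [Fintype Ω] (p : Ω → ℝ) (A : Ω → Prop) : ℝ :=
  ∑ ω : Ω, if A ω then p ω else 0

/-- `p` is a probability mass function. -/
def IsPMF {Ω : Type*} [Fintype Ω] (p : Ω → ℝ) : Prop :=
  (∀ ω, 0 ≤ p ω) ∧ ∑ ω : Ω, p ω = 1

/-- Shannon entropy (base 2) of a random variable `X` under pmf `p`. -/
noncomputable def ent {Ω α : Type*} [Fintype Ω] [Fintype α] (p : Ω → ℝ) (X : Ω → α) : ℝ :=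
  -∑ a : α, pA p (fun ω => X ω = a) * Real.logb 2 (pA p (fun ω => X ω = a))

/-- Conditional entropy `H(X|Y)`. -/
noncomputable def condEnt {Ω α β : Type*} [Fintype Ω] [Fintype α] [Fintype β]
    (p : Ω → ℝ) (X : Ω → α) (Y : Ω → β) : ℝ :=
  ent p (fun ω => (X ω, Y ω)) - ent p Y

/-- Mutual information `I(X;Y)`. -/
noncomputable def mutInfo {Ω α β : Type*} [Fintype Ω] [Fintype α] [Fintype β]
    (p : Ω → ℝ) (X : Ω → α) (Y : Ω → β) : ℝ :=
  ent p X - condEnt p X Y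

/-- Conditional mutual information `I(X;Y|V)`. -/
noncomputable def condMutInfo {Ω α β γ : Type*} [Fintype Ω] [Fintype α] [Fintype β] [Fintype γ]
    (p : Ω → ℝ) (X : Ω → α) (Y : Ω → β) (V : Ω → γ) : ℝ :=
  condEnt p X V - condEnt p X (fun ω => (Y ω, V ω))

/-- Independence of two random variables under pmf `p`. -/
def Indep {Ω α β : Type*} [Fintype Ω] (p : Ω → ℝ) (X : Ω → α) (Y : Ω → β) : Prop :=
  ∀ a b, pA p (fun ω => X ω = a ∧ Y ω = b)
    = pA p (fun ω => X ω = a) * pA p (fun ω => Y ω = b)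

/-- The weighted-sum-rate objective
`∑ₙ B̃(n) H(Xₙ | X^{n-1}, V) + ω ∑ₙ P(N₂ ≥ n) H(Xₙ | X^{n-1})`. -/
noncomputable def wsrObjective {Ω 𝒱 : Type} [Fintype Ω] [Fintype 𝒱] (q : ℕ)
    (Bt F2 : ℕ → ℝ) (ω : ℝ) (p : Ω → ℝ) (V : Ω → 𝒱) (X : Ω → Fin q → Bool) : ℝ :=
  (∑ n : Fin q, Bt (n : ℕ) * condEnt p (fun ω' => X ω' n)
      (fun ω' => ((fun i : Fin q => if (i : ℕ) < (n : ℕ) then some (X ω' i) else none), V ω')))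
  + ω * ∑ n : Fin q, F2 (n : ℕ) * condEnt p (fun ω' => X ω' n)
      (fun ω' => fun i : Fin q => if (i : ℕ) < (n : ℕ) then some (X ω' i) else none)

section Lemmas
set_option linter.unusedSectionVars false

variable {Ω α β γ : Type*} [Fintype Ω] [Fintype α] [Fintype β] [Fintype γ]

lemma pA_nonneg (p : Ω → ℝ) (hp : ∀ ω, 0 ≤ p ω) (A : Ω → Prop) : 0 ≤ pA p A := by
  unfold pA
  refine Finset.sum_nonneg fun ω _ => ?_
  split
  · exact hp ω
  · exact le_rfl

lemma pA_congr (p : Ω → ℝ) {A B : Ω → Prop} (h : ∀ ω, A ω ↔ B ω) : pA p A = pA p B := by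
  unfold pA
  exact Finset.sum_congr rfl fun ω _ => if_congr (h ω) rfl rfl

lemma pA_total (p : Ω → ℝ) (Y : Ω → β) : ∑ b : β, pA p (fun ω => Y ω = b) = ∑ ω : Ω, p ω := by
  unfold pA
  rw [Finset.sum_comm]
  exact Finset.sum_congr rfl fun ω _ => by simp

lemma pA_marginal (p : Ω → ℝ) (X : Ω → α) (Y : Ω → β) (b : β) :
    pA p (fun ω => Y ω = b) = ∑ a : α, pA p (fun ω => (X ω, Y ω) = (a, b)) := by
  unfold pA
  rw [Finset.sum_comm]
  refine Finset.sum_congr rfl fun ω _ => ?_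
  by_cases hY : Y ω = b
  · simp [Prod.ext_iff, hY]
  · simp [Prod.ext_iff, hY]

end Lemmas
section Lemmas2
set_option linter.unusedSectionVars false
variable {Ω α β γ : Type*} [Fintype Ω] [Fintype α] [Fintype β] [Fintype γ]

lemma gibbs_term (x c : ℝ) (hx : 0 ≤ x) (hc : 0 ≤ c) (h : x = 0 ∨ 0 < c) :
    x - c ≤ x * Real.log x - x * Real.log c := by
  rcases h with h | h
  · subst h; simp; linarith
  rcases hx.eq_or_lt with h0 | h0
  · rw [← h0]; simp; linarith
  · have hlog := Real.log_le_sub_one_of_pos (show 0 < c / x by positivity)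
    rw [Real.log_div h.ne' h0.ne'] at hlog
    have h2 := mul_le_mul_of_nonneg_left hlog h0.le
    have h3 : x * (c / x - 1) = c - x := by field_simp
    nlinarith [h2, h3]

end Lemmas2
section Lemmas3
set_option linter.unusedSectionVars false
variable {Ω α β γ : Type*} [Fintype Ω] [Fintype α] [Fintype β] [Fintype γ]

lemma ent_pair_expand (p : Ω → ℝ) (X : Ω → α) (Y : Ω → β) :
    ent p (fun ω => (X ω, Y ω)) =
      -∑ b : β, ∑ a : α, pA p (fun ω => (X ω, Y ω) = (a, b))
        * Real.logb 2 (pA p (fun ω => (X ω, Y ω) = (a, b))) := by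
  unfold ent
  rw [Fintype.sum_prod_type, Finset.sum_comm]

lemma ent_le_ent_pair (p : Ω → ℝ) (hp : ∀ ω, 0 ≤ p ω) (X : Ω → α) (Y : Ω → β) :
    ent p Y ≤ ent p (fun ω => (X ω, Y ω)) := by
  rw [ent_pair_expand]
  unfold ent
  rw [neg_le_neg_iff]
  refine Finset.sum_le_sum fun b _ => ?_
  rw [pA_marginal p X Y b]
  set pb := ∑ a : α, pA p (fun ω => (X ω, Y ω) = (a, b)) with hpb
  have hnn : ∀ a : α, 0 ≤ pA p (fun ω => (X ω, Y ω) = (a, b)) := fun a => pA_nonneg p hp _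
  have hpbnn : 0 ≤ pb := Finset.sum_nonneg fun a _ => hnn a
  calc ∑ a : α, pA p (fun ω => (X ω, Y ω) = (a, b))
          * Real.logb 2 (pA p (fun ω => (X ω, Y ω) = (a, b)))
      ≤ ∑ a : α, pA p (fun ω => (X ω, Y ω) = (a, b)) * Real.logb 2 pb := by
        refine Finset.sum_le_sum fun a _ => ?_
        rcases (hnn a).eq_or_lt with h0 | h0
        · rw [← h0]; simp
        · refine mul_le_mul_of_nonneg_left ?_ (hnn a)
          exact Real.logb_le_logb_of_le one_lt_two h0
            (Finset.single_le_sum (fun a _ => hnn a) (Finset.mem_univ a))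
    _ = pb * Real.logb 2 pb := by rw [← Finset.sum_mul]

end Lemmas3
section Lemmas4
set_option linter.unusedSectionVars false
variable {Ω α β γ : Type*} [Fintype Ω] [Fintype α] [Fintype β] [Fintype γ]

lemma ent_pair_le_bool (p : Ω → ℝ) (hp : IsPMF p) (X : Ω → Bool) (Y : Ω → β) :
    ent p (fun ω => (X ω, Y ω)) ≤ ent p Y + 1 := by
  have hlog2 : (0:ℝ) < Real.log 2 := Real.log_pos one_lt_two
  rw [ent_pair_expand]
  unfold ent
  have key : ∀ b : β,
      pA p (fun ω => Y ω = b) * Real.logb 2 (pA p (fun ω => Y ω = b)) - pA p (fun ω => Y ω = b)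
      ≤ ∑ a : Bool, pA p (fun ω => (X ω, Y ω) = (a, b))
          * Real.logb 2 (pA p (fun ω => (X ω, Y ω) = (a, b))) := by
    intro b
    have hnn : ∀ a : Bool, 0 ≤ pA p (fun ω => (X ω, Y ω) = (a, b)) :=
      fun a => pA_nonneg p hp.1 _
    rw [pA_marginal p X Y b]
    set x : Bool → ℝ := fun a => pA p (fun ω => (X ω, Y ω) = (a, b)) with hx
    set pb := ∑ a : Bool, x a with hpb
    have hpbnn : 0 ≤ pb := Finset.sum_nonneg fun a _ => hnn a
    have hxle : ∀ a, x a ≤ pb := fun a =>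
      Finset.single_le_sum (fun a _ => hnn a) (Finset.mem_univ a)
    have hgibbs : ∑ a : Bool, (x a - pb / 2)
        ≤ ∑ a : Bool, (x a * Real.log (x a) - x a * Real.log (pb / 2)) := by
      refine Finset.sum_le_sum fun a _ => ?_
      refine gibbs_term (x a) (pb / 2) (hnn a) (by linarith) ?_
      rcases hpbnn.eq_or_lt with h0 | h0
      · left; have := hxle a; have := hnn a; linarith
      · right; linarith
    have hhalf : ∑ _a : Bool, pb / 2 = pb := by
      rw [Finset.sum_const, Finset.card_univ, Fintype.card_bool, nsmul_eq_mul]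
      ring
    have hconst : ∑ a : Bool, x a * Real.log (pb / 2) = pb * Real.log (pb / 2) := by
      rw [← Finset.sum_mul]
    have hlogdiv : pb * Real.log (pb / 2) = pb * Real.log pb - pb * Real.log 2 := by
      rcases hpbnn.eq_or_lt with h0 | h0
      · rw [← h0]; ring
      · rw [Real.log_div h0.ne' two_ne_zero]; ring
    have hmain : pb * Real.log pb - pb * Real.log 2 ≤ ∑ a : Bool, x a * Real.log (x a) := by
      rw [Finset.sum_sub_distrib, Finset.sum_sub_distrib, hconst, hlogdiv, hhalf, ← hpb] at hgibbs
      linarith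
    -- convert to logb
    have e1 : ∀ t : ℝ, t * Real.logb 2 t = t * Real.log t / Real.log 2 := fun t => by
      rw [Real.logb]; ring
    simp only [e1]
    rw [← Finset.sum_div]
    have hdiv := (div_le_div_iff_of_pos_right hlog2).mpr hmain
    rw [sub_div, mul_div_cancel_right₀ pb hlog2.ne'] at hdiv
    linarith
  have h1 : -∑ b : β, (pA p (fun ω => Y ω = b) * Real.logb 2 (pA p (fun ω => Y ω = b))
        - pA p (fun ω => Y ω = b))
      = (-∑ b : β, pA p (fun ω => Y ω = b) * Real.logb 2 (pA p (fun ω => Y ω = b))) + 1 := by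
    rw [Finset.sum_sub_distrib, pA_total p Y, hp.2]
    ring
  calc -∑ b : β, ∑ a : Bool, pA p (fun ω => (X ω, Y ω) = (a, b))
          * Real.logb 2 (pA p (fun ω => (X ω, Y ω) = (a, b)))
      ≤ -∑ b : β, (pA p (fun ω => Y ω = b) * Real.logb 2 (pA p (fun ω => Y ω = b))
          - pA p (fun ω => Y ω = b)) := by
        rw [neg_le_neg_iff]; exact Finset.sum_le_sum fun b _ => key b
    _ = _ := h1

end Lemmas4
section Lemmas5
set_option linter.unusedSectionVars false
variable {Ω α β γ : Type*} [Fintype Ω] [Fintype α] [Fintype β] [Fintype γ]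

lemma condEnt_nonneg (p : Ω → ℝ) (hp : ∀ ω, 0 ≤ p ω) (X : Ω → α) (Y : Ω → β) :
    0 ≤ condEnt p X Y :=
  sub_nonneg.mpr (ent_le_ent_pair p hp X Y)

lemma condEnt_le_one (p : Ω → ℝ) (hp : IsPMF p) (X : Ω → Bool) (Y : Ω → β) :
    condEnt p X Y ≤ 1 := by
  have := ent_pair_le_bool p hp X Y
  unfold condEnt
  linarith

lemma wsr_upper (q : ℕ) (Bt F2 : ℕ → ℝ) (ω : ℝ) (hω : 0 ≤ ω)
    (hF2 : ∀ n, 0 ≤ F2 n ∧ F2 n ≤ 1)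
    {Ω 𝒱 : Type} [Fintype Ω] [Fintype 𝒱] (p : Ω → ℝ) (hp : IsPMF p)
    (V : Ω → 𝒱) (X : Ω → Fin q → Bool) :
    wsrObjective q Bt F2 ω p V X
      ≤ (∑ n ∈ Finset.univ.filter (fun n : Fin q => 0 < Bt (n : ℕ)), Bt (n : ℕ))
        + ω * ∑ n : Fin q, F2 (n : ℕ) := by
  unfold wsrObjective
  rw [Finset.sum_filter]
  refine add_le_add (Finset.sum_le_sum fun n _ => ?_)
    (mul_le_mul_of_nonneg_left (Finset.sum_le_sum fun n _ => ?_) hω)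
  · set c := condEnt p (fun ω' => X ω' n)
      (fun ω' => ((fun i : Fin q => if (i : ℕ) < (n : ℕ) then some (X ω' i) else none), V ω'))
      with hc
    have hc0 : 0 ≤ c := condEnt_nonneg p hp.1 _ _
    have hc1 : c ≤ 1 := condEnt_le_one p hp _ _
    by_cases h : 0 < Bt (n : ℕ)
    · rw [if_pos h]
      calc Bt (n : ℕ) * c ≤ Bt (n : ℕ) * 1 := mul_le_mul_of_nonneg_left hc1 h.le
        _ = Bt (n : ℕ) := mul_one _
    · rw [if_neg h]
      exact mul_nonpos_iff.mpr (Or.inr ⟨le_of_not_gt h, hc0⟩)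
  · set c := condEnt p (fun ω' => X ω' n)
      (fun ω' => fun i : Fin q => if (i : ℕ) < (n : ℕ) then some (X ω' i) else none) with hc
    have hc1 : c ≤ 1 := condEnt_le_one p hp _ _
    calc F2 (n : ℕ) * c ≤ F2 (n : ℕ) * 1 :=
          mul_le_mul_of_nonneg_left hc1 (hF2 (n : ℕ)).1
      _ = F2 (n : ℕ) := mul_one _

end Lemmas5
section Lemmas6
set_option linter.unusedSectionVars false
variable {Ω α β γ : Type*} [Fintype Ω] [Fintype α] [Fintype β] [Fintype γ]

lemma ent_comp_eq (p : Ω → ℝ) (Y : Ω → β) (Z : Ω → γ) (f : γ → β) (g : β → γ)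
    (hf : ∀ ω, f (Z ω) = Y ω) (hg : ∀ ω, g (Y ω) = Z ω) : ent p Y = ent p Z := by
  unfold ent
  congr 1
  have hYzero : ∀ b ∈ Finset.univ, b ∉ Finset.univ.image Y →
      pA p (fun ω => Y ω = b) * Real.logb 2 (pA p (fun ω => Y ω = b)) = 0 := by
    intro b _ hb
    have : pA p (fun ω => Y ω = b) = 0 := by
      unfold pA
      refine Finset.sum_eq_zero fun ω _ => ?_
      rw [if_neg]
      intro h
      exact hb (Finset.mem_image.mpr ⟨ω, Finset.mem_univ ω, h⟩)
    rw [this, zero_mul]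
  have hZzero : ∀ c ∈ Finset.univ, c ∉ Finset.univ.image Z →
      pA p (fun ω => Z ω = c) * Real.logb 2 (pA p (fun ω => Z ω = c)) = 0 := by
    intro c _ hc
    have : pA p (fun ω => Z ω = c) = 0 := by
      unfold pA
      refine Finset.sum_eq_zero fun ω _ => ?_
      rw [if_neg]
      intro h
      exact hc (Finset.mem_image.mpr ⟨ω, Finset.mem_univ ω, h⟩)
    rw [this, zero_mul]
  rw [← Finset.sum_subset (Finset.subset_univ (Finset.univ.image Y)) hYzero,
    ← Finset.sum_subset (Finset.subset_univ (Finset.univ.image Z)) hZzero]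
  refine Finset.sum_bij' (fun b _ => g b) (fun c _ => f c) ?_ ?_ ?_ ?_ ?_
  · intro b hb
    obtain ⟨ω, _, rfl⟩ := Finset.mem_image.mp hb
    show g (Y ω) ∈ _
    rw [hg]
    exact Finset.mem_image.mpr ⟨ω, Finset.mem_univ ω, rfl⟩
  · intro c hc
    obtain ⟨ω, _, rfl⟩ := Finset.mem_image.mp hc
    show f (Z ω) ∈ _
    rw [hf]
    exact Finset.mem_image.mpr ⟨ω, Finset.mem_univ ω, rfl⟩
  · intro b hb
    obtain ⟨ω, _, rfl⟩ := Finset.mem_image.mp hb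
    show f (g (Y ω)) = Y ω
    rw [hg, hf]
  · intro c hc
    obtain ⟨ω, _, rfl⟩ := Finset.mem_image.mp hc
    show g (f (Z ω)) = Z ω
    rw [hf, hg]
  · intro b hb
    obtain ⟨ω₀, _, rfl⟩ := Finset.mem_image.mp hb
    have hev : ∀ ω, Y ω = Y ω₀ ↔ Z ω = g (Y ω₀) := by
      intro ω
      constructor
      · intro h; rw [← hg, h]
      · intro h
        have : f (Z ω) = f (g (Y ω₀)) := by rw [h]
        rwa [hf, hg ω₀, hf] at this
    rw [pA_congr p hev]
end Lemmas6
section Lemmas7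
set_option linter.unusedSectionVars false
variable {Ω α β γ : Type*} [Fintype Ω] [Fintype α] [Fintype β] [Fintype γ]

lemma ent_const_fiber (p : Ω → ℝ) (hp1 : ∑ ω : Ω, p ω = 1) (Y : Ω → β) (c : ℝ)
    (h : ∀ ω, pA p (fun ω' => Y ω' = Y ω) = c) : ent p Y = -Real.logb 2 c := by
  unfold ent
  have hzero : ∀ b ∈ Finset.univ, b ∉ Finset.univ.image Y →
      pA p (fun ω => Y ω = b) * Real.logb 2 (pA p (fun ω => Y ω = b)) = 0 := by
    intro b _ hb
    have : pA p (fun ω => Y ω = b) = 0 := by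
      unfold pA
      refine Finset.sum_eq_zero fun ω _ => ?_
      rw [if_neg]
      intro he
      exact hb (Finset.mem_image.mpr ⟨ω, Finset.mem_univ ω, he⟩)
    rw [this, zero_mul]
  rw [← Finset.sum_subset (Finset.subset_univ (Finset.univ.image Y)) hzero]
  have hlogc : ∀ b ∈ Finset.univ.image Y,
      pA p (fun ω => Y ω = b) * Real.logb 2 (pA p (fun ω => Y ω = b))
        = pA p (fun ω => Y ω = b) * Real.logb 2 c := by
    intro b hb
    obtain ⟨ω, _, rfl⟩ := Finset.mem_image.mp hb
    rw [h ω]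
  rw [Finset.sum_congr rfl hlogc, ← Finset.sum_mul,
    Finset.sum_subset (Finset.subset_univ (Finset.univ.image Y)), pA_total p Y, hp1, one_mul]
  intro b _ hb
  unfold pA
  refine Finset.sum_eq_zero fun ω _ => ?_
  rw [if_neg]
  intro he
  exact hb (Finset.mem_image.mpr ⟨ω, Finset.mem_univ ω, he⟩)

end Lemmas7
/-- Reveal the coordinates in `S`. -/
noncomputable def rv (q : ℕ) (S : Finset (Fin q)) (ω : Fin q → Bool) : Fin q → Option Bool :=
  fun i => if i ∈ S then some (ω i) else none

section Lemmas8

lemma rv_eq_iff (q : ℕ) (S : Finset (Fin q)) (ω ω₀ : Fin q → Bool) :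
    rv q S ω = rv q S ω₀ ↔ ∀ i ∈ S, ω i = ω₀ i := by
  constructor
  · intro h i hi
    have := congrFun h i
    unfold rv at this
    rw [if_pos hi, if_pos hi] at this
    exact Option.some_injective _ this
  · intro h
    funext i
    unfold rv
    by_cases hi : i ∈ S
    · rw [if_pos hi, if_pos hi, h i hi]
    · rw [if_neg hi, if_neg hi]

lemma card_agree (q : ℕ) (S : Finset (Fin q)) (ω₀ : Fin q → Bool) :
    (Finset.univ.filter (fun ω : Fin q → Bool => ∀ i ∈ S, ω i = ω₀ i)).card
      = 2 ^ (Sᶜ.card) := by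
  have : (Finset.univ : Finset ((Sᶜ : Finset (Fin q)) → Bool)).card = 2 ^ Sᶜ.card := by
    rw [Finset.card_univ, Fintype.card_fun, Fintype.card_coe, Fintype.card_bool]
  rw [← this]
  refine Finset.card_nbij' (fun ω => fun j => ω j.1)
    (fun g => fun i => if h : i ∈ S then ω₀ i else g ⟨i, Finset.mem_compl.mpr h⟩)
    (fun ω _ => Finset.mem_univ _) ?_ ?_ ?_
  · intro g _
    rw [Finset.mem_coe, Finset.mem_filter]
    exact ⟨Finset.mem_univ _, fun i hi => dif_pos hi⟩
  · intro ω hω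
    rw [Finset.mem_coe, Finset.mem_filter] at hω
    funext i
    show (if _h : i ∈ S then ω₀ i else ω i) = ω i
    by_cases h : i ∈ S
    · rw [dif_pos h, hω.2 i h]
    · rw [dif_neg h]
  · intro g _
    funext j
    have : j.1 ∉ S := Finset.mem_compl.mp j.2
    simp [this]

lemma pA_const {α : Type*} [Fintype α] (v : ℝ) (A : α → Prop) :
    pA (fun _ : α => v) A = (Finset.univ.filter A).card * v := by
  unfold pA
  rw [← Finset.sum_filter, Finset.sum_const, nsmul_eq_mul]

lemma pA_rv (q : ℕ) (S : Finset (Fin q)) (ω₀ : Fin q → Bool) :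
    pA (fun _ : Fin q → Bool => (1/2:ℝ)^q) (fun ω => rv q S ω = rv q S ω₀)
      = (1/2:ℝ) ^ S.card := by
  rw [pA_congr (fun _ : Fin q → Bool => (1/2:ℝ)^q)
    (fun ω : Fin q → Bool => rv_eq_iff q S ω ω₀), pA_const,
    Finset.filter_congr_decidable, card_agree q S ω₀]
  have hcard : S.card + Sᶜ.card = q := by
    rw [Finset.card_add_card_compl]
    simp
  push_cast
  rw [show ((1:ℝ)/2)^q = (1/2)^S.card * (1/2)^Sᶜ.card by rw [← pow_add, hcard]]
  rw [show ((2:ℝ))^Sᶜ.card * ((1/2:ℝ)^S.card * (1/2)^Sᶜ.card)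
      = (1/2:ℝ)^S.card * ((2 * (1/2):ℝ))^Sᶜ.card by rw [mul_pow]; ring]
  norm_num

lemma ent_rv (q : ℕ) (S : Finset (Fin q)) :
    ent (fun _ : Fin q → Bool => (1/2:ℝ)^q) (rv q S) = S.card := by
  rw [ent_const_fiber _ ?_ _ ((1/2:ℝ)^S.card) (fun ω => pA_rv q S ω)]
  · rw [Real.logb_pow, one_div, Real.logb_inv, Real.logb_self_eq_one one_lt_two]
    ring
  · rw [Finset.sum_const, Finset.card_univ, Fintype.card_fun, Fintype.card_fin,
      Fintype.card_bool, nsmul_eq_mul]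
    push_cast
    rw [← mul_pow]
    norm_num

end Lemmas8
section Lemmas9

lemma condEnt_eval_rv (q : ℕ) (S : Finset (Fin q)) (n : Fin q) {β : Type*} [Fintype β]
    (Y : (Fin q → Bool) → β) (f : (Fin q → Option Bool) → β)
    (g : β → (Fin q → Option Bool))
    (hf : ∀ ω, f (rv q S ω) = Y ω) (hg : ∀ ω, g (Y ω) = rv q S ω) :
    condEnt (fun _ : Fin q → Bool => (1/2:ℝ)^q) (fun ω => ω n) Y
      = if n ∈ S then 0 else 1 := by
  have hY : ent (fun _ : Fin q → Bool => (1/2:ℝ)^q) Y = S.card :=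
    (ent_comp_eq _ Y (rv q S) f g hf hg).trans (ent_rv q S)
  have hr : ∀ ω : Fin q → Bool,
      (fun i => if i ∈ S then rv q (insert n S) ω i else none) = rv q S ω := by
    intro ω
    funext i
    by_cases hi : i ∈ S
    · simp only [if_pos hi]
      unfold rv
      rw [if_pos hi, if_pos (Finset.mem_insert_of_mem hi)]
    · simp only [if_neg hi]
      unfold rv
      rw [if_neg hi]
  have hpair : ent (fun _ : Fin q → Bool => (1/2:ℝ)^q) (fun ω => (ω n, Y ω))
      = (insert n S).card := by
    refine (ent_comp_eq _ _ (rv q (insert n S))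
      (fun a => ((a n).getD false, f (fun i => if i ∈ S then a i else none)))
      (fun bc => fun i => if i = n then some bc.1 else g bc.2 i) ?_ ?_).trans
      (ent_rv q (insert n S))
    · intro ω
      show ((rv q (insert n S) ω n).getD false, _) = (ω n, Y ω)
      rw [hr ω, hf ω]
      unfold rv
      rw [if_pos (Finset.mem_insert_self n S)]
      rfl
    · intro ω
      show (fun i => if i = n then some ((ω n, Y ω).1) else g ((ω n, Y ω).2) i)
        = rv q (insert n S) ω
      funext i
      by_cases hi : i = n
      · subst hi
        rw [if_pos rfl]
        unfold rv
        rw [if_pos (Finset.mem_insert_self i S)]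
      · rw [if_neg hi]
        have := congrFun (hg ω) i
        rw [this]
        unfold rv
        by_cases hiS : i ∈ S
        · rw [if_pos hiS, if_pos (Finset.mem_insert_of_mem hiS)]
        · rw [if_neg hiS, if_neg (by
            intro h
            rcases Finset.mem_insert.mp h with h | h
            exacts [hi h, hiS h])]
  unfold condEnt
  rw [hpair, hY]
  by_cases hn : n ∈ S
  · rw [if_pos hn, Finset.insert_eq_self.mpr hn]
    ring
  · rw [if_neg hn, Finset.card_insert_of_notMem hn]
    push_cast
    ring

end Lemmas9
/-- For the layered erasure BC, the weighted-sum-rate objective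
`∑ₙ B̃(n) H(Xₙ|X^{n-1},V) + ω ∑ₙ P(N₂ ≥ n) H(Xₙ|X^{n-1})`, maximized over joint
distributions of `(V, X^q)`, is at most `∑_{n : B̃(n)>0} B̃(n) + ω ∑ₙ P(N₂ ≥ n)`, and this
maximum is achieved by taking `X₁,…,X_q` i.i.d. Bernoulli(1/2) and
`V = {Xₙ : B̃(n) ≤ 0}`. -/
theorem wsr_maximized_by_iid_bits (q : ℕ) (Bt F2 : ℕ → ℝ) (ω : ℝ) (hω : 0 ≤ ω)
    (hBt : ∀ n, Bt n ≤ 1) (hF2 : ∀ n, 0 ≤ F2 n ∧ F2 n ≤ 1) :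
    (∀ (Ω : Type) [Fintype Ω] (𝒱 : Type) [Fintype 𝒱] (p : Ω → ℝ), IsPMF p →
      ∀ (V : Ω → 𝒱) (X : Ω → Fin q → Bool),
        wsrObjective q Bt F2 ω p V X
          ≤ (∑ n ∈ Finset.univ.filter (fun n : Fin q => 0 < Bt (n : ℕ)), Bt (n : ℕ))
            + ω * ∑ n : Fin q, F2 (n : ℕ)) ∧
    (∃ (Ω : Type) (_ : Fintype Ω) (p : Ω → ℝ) (X : Ω → Fin q → Bool),
      IsPMF p ∧
      (∀ x : Fin q → Bool, pA p (fun ω' => X ω' = x) = (1 / 2) ^ q) ∧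
      wsrObjective q Bt F2 ω p
          (fun ω' => fun n : Fin q => if Bt (n : ℕ) ≤ 0 then some (X ω' n) else none) X
        = (∑ n ∈ Finset.univ.filter (fun n : Fin q => 0 < Bt (n : ℕ)), Bt (n : ℕ))
          + ω * ∑ n : Fin q, F2 (n : ℕ)) := by
  constructor
  · intro Ω _ 𝒱 _ p hp V X
    exact wsr_upper q Bt F2 ω hω hF2 p hp V X
  · refine ⟨Fin q → Bool, inferInstance, fun _ => (1/2:ℝ)^q, fun ω' => ω', ?_, ?_, ?_⟩
    · constructor
      · intro ω'; positivity
      · rw [Finset.sum_const, Finset.card_univ, Fintype.card_fun, Fintype.card_fin,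
          Fintype.card_bool, nsmul_eq_mul]
        push_cast
        rw [← mul_pow]
        norm_num
    · intro x
      show pA (fun _ : Fin q → Bool => (1/2:ℝ)^q) (fun ω' : Fin q → Bool => ω' = x)
        = (1/2:ℝ)^q
      rw [pA_const, Finset.filter_congr_decidable, Finset.filter_eq',
        if_pos (Finset.mem_univ x), Finset.card_singleton]
      norm_num
    · -- value of the objective at the iid uniform distribution
      have hterm2 : ∀ n : Fin q,
          condEnt (fun _ : Fin q → Bool => (1/2:ℝ)^q) (fun ω' : Fin q → Bool => ω' n)
            (fun ω' : Fin q → Bool =>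
              fun i : Fin q => if (i : ℕ) < (n : ℕ) then some (ω' i) else none) = 1 := by
        intro n
        set S2 : Finset (Fin q) := Finset.univ.filter (fun i : Fin q => (i : ℕ) < (n : ℕ))
          with hS2
        have hmem2 : ∀ i : Fin q, i ∈ S2 ↔ (i : ℕ) < (n : ℕ) := by
          intro i
          rw [hS2, Finset.mem_filter]
          exact ⟨fun h => h.2, fun h => ⟨Finset.mem_univ i, h⟩⟩
        have hrv : ∀ ω' : Fin q → Bool, rv q S2 ω'
            = fun i : Fin q => if (i : ℕ) < (n : ℕ) then some (ω' i) else none := by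
          intro ω'
          funext i
          unfold rv
          by_cases h : (i : ℕ) < (n : ℕ)
          · rw [if_pos ((hmem2 i).mpr h), if_pos h]
          · rw [if_neg (fun hc => h ((hmem2 i).mp hc)), if_neg h]
        have hc := condEnt_eval_rv q S2 n _ id id (fun ω' => hrv ω') (fun ω' => (hrv ω').symm)
        rw [hc, if_neg (show n ∉ S2 from fun hc' => Nat.lt_irrefl _ ((hmem2 n).mp hc'))]
      have hterm1 : ∀ n : Fin q,
          condEnt (fun _ : Fin q → Bool => (1/2:ℝ)^q) (fun ω' : Fin q → Bool => ω' n)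
            (fun ω' : Fin q → Bool =>
              ((fun i : Fin q => if (i : ℕ) < (n : ℕ) then some (ω' i) else none),
               (fun i : Fin q => if Bt (i : ℕ) ≤ 0 then some (ω' i) else none)))
          = if Bt (n : ℕ) ≤ 0 then 0 else 1 := by
        intro n
        set S1 : Finset (Fin q) :=
          Finset.univ.filter (fun i : Fin q => (i : ℕ) < (n : ℕ) ∨ Bt (i : ℕ) ≤ 0) with hS1
        have hmem : ∀ i : Fin q, i ∈ S1 ↔ ((i : ℕ) < (n : ℕ) ∨ Bt (i : ℕ) ≤ 0) := by
          intro i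
          rw [hS1, Finset.mem_filter]
          exact ⟨fun h => h.2, fun h => ⟨Finset.mem_univ i, h⟩⟩
        have hf : ∀ ω' : Fin q → Bool,
            (fun a : Fin q → Option Bool =>
              ((fun i : Fin q => if (i : ℕ) < (n : ℕ) then a i else none),
               (fun i : Fin q => if Bt (i : ℕ) ≤ 0 then a i else none))) (rv q S1 ω')
            = ((fun i : Fin q => if (i : ℕ) < (n : ℕ) then some (ω' i) else none),
               (fun i : Fin q => if Bt (i : ℕ) ≤ 0 then some (ω' i) else none)) := by
          intro ω'
          refine Prod.ext ?_ ?_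
          · show (fun i : Fin q => if (i : ℕ) < (n : ℕ) then rv q S1 ω' i else none)
              = fun i : Fin q => if (i : ℕ) < (n : ℕ) then some (ω' i) else none
            funext i
            by_cases h : (i : ℕ) < (n : ℕ)
            · rw [if_pos h, if_pos h]
              unfold rv
              rw [if_pos ((hmem i).mpr (Or.inl h))]
            · rw [if_neg h, if_neg h]
          · show (fun i : Fin q => if Bt (i : ℕ) ≤ 0 then rv q S1 ω' i else none)
              = fun i : Fin q => if Bt (i : ℕ) ≤ 0 then some (ω' i) else none
            funext i
            by_cases h : Bt (i : ℕ) ≤ 0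
            · rw [if_pos h, if_pos h]
              unfold rv
              rw [if_pos ((hmem i).mpr (Or.inr h))]
            · rw [if_neg h, if_neg h]
        have hg : ∀ ω' : Fin q → Bool,
            (fun bc : (Fin q → Option Bool) × (Fin q → Option Bool) =>
              (fun i : Fin q => if (i : ℕ) < (n : ℕ) then bc.1 i else bc.2 i))
            ((fun i : Fin q => if (i : ℕ) < (n : ℕ) then some (ω' i) else none),
             (fun i : Fin q => if Bt (i : ℕ) ≤ 0 then some (ω' i) else none))
            = rv q S1 ω' := by
          intro ω'
          funext i
          show (if (i : ℕ) < (n : ℕ)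
              then (if (i : ℕ) < (n : ℕ) then some (ω' i) else none)
              else (if Bt (i : ℕ) ≤ 0 then some (ω' i) else none)) = rv q S1 ω' i
          unfold rv
          by_cases h1 : (i : ℕ) < (n : ℕ)
          · rw [if_pos h1, if_pos h1, if_pos ((hmem i).mpr (Or.inl h1))]
          · rw [if_neg h1]
            by_cases h2 : Bt (i : ℕ) ≤ 0
            · rw [if_pos h2, if_pos ((hmem i).mpr (Or.inr h2))]
            · rw [if_neg h2, if_neg (fun hc => by
                rcases (hmem i).mp hc with h | h
                exacts [h1 h, h2 h])]
        have hc := condEnt_eval_rv q S1 n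
          (fun ω' : Fin q → Bool =>
            ((fun i : Fin q => if (i : ℕ) < (n : ℕ) then some (ω' i) else none),
             (fun i : Fin q => if Bt (i : ℕ) ≤ 0 then some (ω' i) else none)))
          (fun a : Fin q → Option Bool =>
            ((fun i : Fin q => if (i : ℕ) < (n : ℕ) then a i else none),
             (fun i : Fin q => if Bt (i : ℕ) ≤ 0 then a i else none)))
          (fun bc : (Fin q → Option Bool) × (Fin q → Option Bool) =>
            (fun i : Fin q => if (i : ℕ) < (n : ℕ) then bc.1 i else bc.2 i))
          hf hg
        rw [hc]
        refine if_congr ?_ rfl rfl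
        rw [hmem n]
        constructor
        · rintro (h | h)
          · exact absurd h (Nat.lt_irrefl _)
          · exact h
        · exact Or.inr
      unfold wsrObjective
      beta_reduce
      have e1 : ∀ n : Fin q,
          Bt (n : ℕ) * (if Bt (n : ℕ) ≤ 0 then (0:ℝ) else 1)
            = if 0 < Bt (n : ℕ) then Bt (n : ℕ) else 0 := by
        intro n
        by_cases h : Bt (n : ℕ) ≤ 0
        · rw [if_pos h, if_neg (not_lt.mpr h), mul_zero]
        · rw [if_neg h, if_pos (lt_of_not_ge h), mul_one]
      congr 1
      · rw [Finset.sum_filter]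
        refine Finset.sum_congr rfl fun n _ => ?_
        rw [hterm1 n, e1 n]
      · congr 1
        refine Finset.sum_congr rfl fun n _ => ?_
        rw [hterm2 n, mul_one]
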